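/- Let C = ΦΦᵀ + αI where Φ ∈ R^{d×n}, α > 0, and let θ, x ∈ R^d with ‖θ‖₂ ≤ 1 and xᵀC⁻¹x ≤ 1. Then |xᵀ(C⁻¹ΦΦᵀ − I)θ| ≤ √α. -/

import Mathlib

open Matrix

theorem stmt_6 {d n : ℕ} (Φ : Matrix (Fin d) (Fin n) ℝ)
    (α : ℝ) (hα : 0 < α)
    (C : Matrix (Fin d) (Fin d) ℝ)
    (hC : C = Φ * Φᵀ + α • (1 : Matrix (Fin d) (Fin d) ℝ))
    (θ x : Fin d → ℝ) (hθ : ∑ i, (θ i) ^ 2 ≤ 1)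
    (hx : x ⬝ᵥ C⁻¹.mulVec x ≤ 1) :
    |x ⬝ᵥ (C⁻¹ * (Φ * Φᵀ) - 1).mulVec θ| ≤ Real.sqrt α := by
  have hΦt : Φᵀ = Φᴴ := by
    ext i j; simp [conjTranspose]
  have hM : (Φ * Φᵀ).PosSemidef := by
    rw [hΦt]; exact Matrix.posSemidef_self_mul_conjTranspose _
  have hα1 : (α • (1 : Matrix (Fin d) (Fin d) ℝ)).PosDef := by
    have h1 : (α • (1 : Matrix (Fin d) (Fin d) ℝ)) = Matrix.diagonal (fun _ => α) := by
      ext i j; by_cases h : i = j <;> simp [Matrix.one_apply, Matrix.diagonal, h]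
    rw [h1]
    exact Matrix.posDef_diagonal_iff.mpr fun _ => hα
  have hCpd : C.PosDef := by
    rw [hC]; exact Matrix.PosDef.posSemidef_add hM hα1
  have hdet : IsUnit C.det := hCpd.det_pos.ne'.isUnit
  have hCCi : C * C⁻¹ = 1 := Matrix.mul_nonsing_inv C hdet
  have hCiC : C⁻¹ * C = 1 := Matrix.nonsing_inv_mul C hdet
  have key : C⁻¹ * (Φ * Φᵀ) - 1 = (-α) • C⁻¹ := by
    have h1 : Φ * Φᵀ = C - α • 1 := by rw [hC]; abel
    rw [h1, Matrix.mul_sub, hCiC, Matrix.mul_smul, Matrix.mul_one]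
    module
  -- y = C⁻¹ x
  set y := C⁻¹.mulVec x with hy
  have hCinvsym : (C⁻¹)ᵀ = C⁻¹ := by
    have := hCpd.isHermitian.inv
    have h2 : (C⁻¹)ᴴ = C⁻¹ := this
    simpa [Matrix.conjTranspose_eq_transpose_of_trivial] using h2
  have hxθ : x ⬝ᵥ C⁻¹.mulVec θ = y ⬝ᵥ θ := by
    rw [Matrix.dotProduct_mulVec, ← Matrix.mulVec_transpose, hCinvsym]
  have expr : x ⬝ᵥ (C⁻¹ * (Φ * Φᵀ) - 1).mulVec θ = -α * (y ⬝ᵥ θ) := by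
    rw [key, Matrix.smul_mulVec, dotProduct_smul, hxθ, smul_eq_mul]
  have hCy : C.mulVec y = x := by
    rw [hy, Matrix.mulVec_mulVec, hCCi, Matrix.one_mulVec]
  -- x ⬝ y = y C y ≥ α ‖y‖²
  have hMy : 0 ≤ y ⬝ᵥ (Φ * Φᵀ).mulVec y := by
    have := hM.dotProduct_mulVec_nonneg y
    simpa using this
  have hxy : x ⬝ᵥ y = y ⬝ᵥ (Φ * Φᵀ).mulVec y + α * (y ⬝ᵥ y) := by
    have : x ⬝ᵥ y = (C.mulVec y) ⬝ᵥ y := by rw [hCy]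
    rw [this, hC, Matrix.add_mulVec, Matrix.smul_mulVec, Matrix.one_mulVec,
      add_dotProduct, smul_dotProduct, smul_eq_mul,
      dotProduct_comm ((Φ * Φᵀ) *ᵥ y) y]
  have hyy : 0 ≤ y ⬝ᵥ y := by
    simpa [dotProduct, ← sq] using Finset.sum_nonneg fun i _ => sq_nonneg (y i)
  have hαyy : α * (y ⬝ᵥ y) ≤ 1 := by
    have : α * (y ⬝ᵥ y) ≤ x ⬝ᵥ y := by rw [hxy]; linarith
    exact this.trans hx
  -- Cauchy-Schwarz
  have hcs : (y ⬝ᵥ θ) ^ 2 ≤ (y ⬝ᵥ y) * 1 := by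
    have h1 := Finset.sum_mul_sq_le_sq_mul_sq Finset.univ y θ
    have h2 : (y ⬝ᵥ θ) ^ 2 ≤ (∑ i, y i ^ 2) * ∑ i, θ i ^ 2 := by
      simpa [dotProduct] using h1
    have h3 : (∑ i, y i ^ 2) * ∑ i, θ i ^ 2 ≤ (∑ i, y i ^ 2) * 1 := by
      apply mul_le_mul_of_nonneg_left hθ
      exact Finset.sum_nonneg fun i _ => sq_nonneg (y i)
    calc (y ⬝ᵥ θ) ^ 2 ≤ (∑ i, y i ^ 2) * ∑ i, θ i ^ 2 := h2
      _ ≤ (∑ i, y i ^ 2) * 1 := h3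
      _ = (y ⬝ᵥ y) * 1 := by simp [dotProduct, sq]
  rw [expr]
  rw [abs_mul, abs_neg, abs_of_pos hα]
  rw [Real.le_sqrt (by positivity) hα.le]
  have : (α * |y ⬝ᵥ θ|) ^ 2 = α * (α * (y ⬝ᵥ θ)^2) := by rw [mul_pow, sq_abs]; ring
  rw [this]
  nlinarith [sq_abs (y ⬝ᵥ θ), mul_le_mul_of_nonneg_left hcs hα.le]
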